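/- Let e, k, j be positive integers with j + k ≤ e - 1 and j ≤ k. Then the interval [2e+2j-1, 2e+j+k-1] consists entirely of gaps of the semigroup S_k^e(j) = ⟨e,...,e+j-1, e+j+k,...,2e-1⟩, i.e., no element 2e+2j+u with -1 ≤ u ≤ k-j-1 belongs to S_k^e(j). -/

import Mathlib

/-- The set of gaps of a numerical semigroup (submonoid of ℕ). -/
def gapsOf (S : AddSubmonoid ℕ) : Set ℕ := {n | n ∉ S}

/-- The Frobenius number: the largest gap. -/
noncomputable def frobeniusNumber (S : AddSubmonoid ℕ) : ℕ := sSup (gapsOf S)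

/-- The genus: the number of gaps. -/
noncomputable def genusOf (S : AddSubmonoid ℕ) : ℕ := Nat.card (gapsOf S)

/-- A numerical semigroup is symmetric iff 2g = F + 1. -/
def IsSymmetricNS (S : AddSubmonoid ℕ) : Prop :=
  2 * genusOf S = frobeniusNumber S + 1

/-- The Sally type semigroup `S_k^e(j) = ⟨e,…,e+j-1, e+j+k,…,2e-1⟩`. -/
def sally (e k j : ℕ) : AddSubmonoid ℕ :=
  AddSubmonoid.closure (Set.Ico e (e + j) ∪ Set.Ico (e + j + k) (2 * e))

theorem sally_gap_interval (e k j : ℕ) (he : 0 < e) (hk : 0 < k) (hj : 0 < j)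
    (hjk : j + k ≤ e - 1) (hjle : j ≤ k) :
    ∀ x : ℕ, 2 * e + 2 * j - 1 ≤ x → x ≤ 2 * e + j + k - 1 → x ∉ sally e k j := by
  intro x hx1 hx2 hmem
  have key : ∀ y ∈ sally e k j, y = 0 ∨
      (e ≤ y ∧ y ≤ 2 * e - 1 ∧ (y < e + j ∨ e + j + k ≤ y)) ∨
      (2 * e ≤ y ∧ y ≤ 2 * e + 2 * j - 2) ∨ 2 * e + j + k ≤ y := by
    intro y hy
    induction hy using AddSubmonoid.closure_induction with
    | mem z hz =>
      simp only [Set.mem_union, Set.mem_Ico] at hz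
      omega
    | zero => left; rfl
    | add a b ha hb iha ihb => omega
  have := key x hmem
  omega
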